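/- Let f be a transcendental entire function, let R0 > 0 be such that M(r, f) > r for all r ≥ R0, and let ε : [R0, ∞) → (0, 1) be a nonincreasing function such that ε(M^n(r, f)) ≥ ε(r)^{n+1} for all r ≥ R0 and all n ≥ 1. Then for every k > 0 there exists r* ≥ R0 such that for all r ≥ r* and all R ≥ r, log M(ε(r)R, f) / log(ε(r)R) > k. -/

import Mathlib

/-- The maximum modulus function `M(r, f) = max_{|z| = r} |f z|`. -/
noncomputable def maxMod (f : ℂ → ℂ) (r : ℝ) : ℝ :=
  sSup ((fun z => ‖f z‖) '' Metric.sphere (0 : ℂ) r)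

/-- `f` is a transcendental entire function: differentiable on all of `ℂ`
and not (the evaluation of) a polynomial. -/
def EntireTranscendental (f : ℂ → ℂ) : Prop :=
  Differentiable ℂ f ∧ ¬∃ p : Polynomial ℂ, ∀ z, f z = p.eval z

lemma maxMod_ge {f : ℂ → ℂ} (hf : Continuous f) {r : ℝ} {z : ℂ}
    (hz : z ∈ Metric.sphere (0:ℂ) r) : ‖f z‖ ≤ maxMod f r :=
  le_csSup (((isCompact_sphere (0:ℂ) r).image
    (continuous_norm.comp hf)).bddAbove) ⟨z, hz, rfl⟩

lemma maxMod_exists {f : ℂ → ℂ} (hf : Continuous f) {r : ℝ} (hr : 0 ≤ r) :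
    ∃ w : ℂ, w ∈ Metric.sphere (0:ℂ) r ∧ maxMod f r = ‖f w‖ := by
  have hne : (Metric.sphere (0:ℂ) r).Nonempty := NormedSpace.sphere_nonempty.mpr hr
  obtain ⟨w, hw, hmax⟩ := (isCompact_sphere (0:ℂ) r).exists_sSup_image_eq hne
      ((continuous_norm.comp hf).continuousOn)
  exact ⟨w, hw, hmax⟩

lemma maxMod_nonneg {f : ℂ → ℂ} (hf : Continuous f) {r : ℝ} (hr : 0 ≤ r) :
    0 ≤ maxMod f r := by
  refine le_trans (norm_nonneg (f r)) (maxMod_ge hf ?_)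
  simp [abs_of_nonneg hr]

lemma coeff_bound {f : ℂ → ℂ} (hf : Differentiable ℂ f) (m : ℕ) {R : ℝ} (hR : 0 < R) :
    ‖(cauchyPowerSeries f 0 1).coeff m‖ * R ^ m ≤ maxMod f R := by
  lift R to NNReal using hR.le with R' hR'
  have hR0 : (0:NNReal) < R' := by exact_mod_cast hR
  have hp1 := hf.hasFPowerSeriesOnBall (0:ℂ) (R := 1) one_pos
  have hpR := hf.hasFPowerSeriesOnBall (0:ℂ) (R := R') hR0
  have heq : cauchyPowerSeries f 0 1 = cauchyPowerSeries f 0 R' :=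
    hp1.hasFPowerSeriesAt.eq_formalMultilinearSeries hpR.hasFPowerSeriesAt
  rw [heq]
  have hcont : Continuous f := hf.continuous
  have hI : (∫ θ : ℝ in (0)..2 * Real.pi, ‖f (circleMap 0 R' θ)‖)
      ≤ 2 * Real.pi * maxMod f R' := by
    calc (∫ θ : ℝ in (0)..2 * Real.pi, ‖f (circleMap 0 R' θ)‖)
        ≤ ∫ _θ : ℝ in (0)..2 * Real.pi, maxMod f R' := by
          apply intervalIntegral.integral_mono_on Real.two_pi_pos.le
          · exact ((hcont.comp (continuous_circleMap 0 R')).norm).intervalIntegrable _ _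
          · exact intervalIntegrable_const
          · intro θ _
            exact maxMod_ge hcont (circleMap_mem_sphere 0 (by exact_mod_cast hR.le) θ)
      _ = 2 * Real.pi * maxMod f R' := by simp [mul_comm]
  have hb := norm_cauchyPowerSeries_le f 0 (R' : ℝ) m
  rw [FormalMultilinearSeries.norm_apply_eq_norm_coef] at hb
  have h1 : ‖(cauchyPowerSeries f 0 R').coeff m‖ ≤ maxMod f R' * |(R':ℝ)|⁻¹ ^ m := by
    refine hb.trans ?_
    have : (2 * Real.pi)⁻¹ * (∫ θ : ℝ in (0)..2 * Real.pi, ‖f (circleMap 0 R' θ)‖)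
        ≤ maxMod f R' := by
      rw [inv_mul_le_iff₀ Real.two_pi_pos]
      exact hI.trans (le_of_eq (by ring))
    exact mul_le_mul_of_nonneg_right this (by positivity)
  have hRabs : |(R':ℝ)| = (R':ℝ) := abs_of_pos hR
  rw [hRabs] at h1
  calc ‖(cauchyPowerSeries f 0 R').coeff m‖ * (R':ℝ) ^ m
      ≤ maxMod f R' * (R':ℝ)⁻¹ ^ m * (R':ℝ) ^ m :=
        mul_le_mul_of_nonneg_right h1 (by positivity)
    _ = maxMod f R' := by
        rw [mul_assoc, inv_pow, inv_mul_cancel₀ (by positivity)]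
        ring

lemma exists_coeff_ne {f : ℂ → ℂ} (hf : EntireTranscendental f) (N : ℕ) :
    ∃ m, N ≤ m ∧ (cauchyPowerSeries f 0 1).coeff m ≠ 0 := by
  by_contra h
  push_neg at h
  apply hf.2
  set p := cauchyPowerSeries f 0 1 with hp
  have hball := hf.1.hasFPowerSeriesOnBall (0:ℂ) (R := 1) one_pos
  refine ⟨∑ n ∈ Finset.range N, Polynomial.C (p.coeff n) * Polynomial.X ^ n, fun z => ?_⟩
  have hsum : HasSum (fun n => z ^ n • p.coeff n) (f z) := by
    have := hball.hasSum (y := z) (by simp [EMetric.mem_ball, edist_lt_top])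
    simpa [FormalMultilinearSeries.apply_eq_pow_smul_coeff] using this
  have hsum2 : HasSum (fun n => z ^ n • p.coeff n)
      (∑ n ∈ Finset.range N, z ^ n • p.coeff n) := by
    apply hasSum_sum_of_ne_finset_zero
    intro b hb
    have hbN : N ≤ b := le_of_not_gt (fun hlt => hb (Finset.mem_range.mpr hlt))
    rw [h b hbN, smul_zero]
  have := hsum.unique hsum2
  rw [this, Polynomial.eval_finset_sum]
  refine Finset.sum_congr rfl fun n _ => ?_
  rw [Polynomial.eval_mul, Polynomial.eval_C, Polynomial.eval_pow, Polynomial.eval_X,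
    smul_eq_mul, mul_comm]

lemma growth {f : ℂ → ℂ} (hf : EntireTranscendental f) (A : ℝ) :
    ∃ s1 : ℝ, 2 ≤ s1 ∧ ∀ s, s1 ≤ s →
      0 < maxMod f s ∧ A * Real.log s < Real.log (maxMod f s) := by
  obtain ⟨m, hmN, hm0⟩ := exists_coeff_ne hf (⌈|A|⌉₊ + 1)
  set c : ℝ := ‖(cauchyPowerSeries f 0 1).coeff m‖ with hc
  have hc0 : 0 < c := norm_pos_iff.mpr hm0
  have hAm : A < (m : ℝ) := by
    have h1 : A ≤ |A| := le_abs_self A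
    have h2 : |A| ≤ (⌈|A|⌉₊ : ℝ) := Nat.le_ceil _
    have h3 : (⌈|A|⌉₊ : ℝ) + 1 ≤ (m : ℝ) := by exact_mod_cast hmN
    linarith
  refine ⟨max 2 (Real.exp ((1 - Real.log c) / ((m : ℝ) - A))), le_max_left _ _, fun s hs => ?_⟩
  have hs2 : (2:ℝ) ≤ s := le_trans (le_max_left _ _) hs
  have hs0 : 0 < s := by linarith
  have hMlb := coeff_bound hf.1 m hs0
  have hcs : 0 < c * s ^ m := by positivity
  have hMpos : 0 < maxMod f s := lt_of_lt_of_le hcs hMlb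
  refine ⟨hMpos, ?_⟩
  have hlog1 : Real.log (c * s ^ m) ≤ Real.log (maxMod f s) := Real.log_le_log hcs hMlb
  rw [Real.log_mul hc0.ne' (by positivity), Real.log_pow] at hlog1
  have hls : (1 - Real.log c) / ((m : ℝ) - A) ≤ Real.log s := by
    have := Real.log_le_log (Real.exp_pos _) (le_trans (le_max_right _ _) hs)
    rwa [Real.log_exp] at this
  have hkey : 1 - Real.log c ≤ ((m : ℝ) - A) * Real.log s := by
    rw [← div_le_iff₀' (by linarith : (0:ℝ) < (m:ℝ) - A)] at *
    exact hls
  nlinarith [hlog1, hkey]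

theorem simply_connected_fast_escaping_stmt2
    (f : ℂ → ℂ) (hf : EntireTranscendental f)
    (R0 : ℝ) (hR0 : 0 < R0) (hM : ∀ r ≥ R0, r < maxMod f r)
    (ε : ℝ → ℝ)
    (hε01 : ∀ r ≥ R0, ε r ∈ Set.Ioo (0 : ℝ) 1)
    (hεmono : ∀ r s, R0 ≤ r → r ≤ s → ε s ≤ ε r)
    (hεM : ∀ r ≥ R0, ∀ n : ℕ, 1 ≤ n → ε r ^ (n + 1) ≤ ε ((maxMod f)^[n] r)) :
    ∀ k : ℝ, 0 < k → ∃ rstar : ℝ, R0 ≤ rstar ∧ ∀ r ≥ rstar, ∀ R ≥ r,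
      k < Real.log (maxMod f (ε r * R)) / Real.log (ε r * R) := by
  classical
  intro k hk
  have hcont : Continuous f := hf.1.continuous
  obtain ⟨s1, hs1_2, hgrow⟩ := growth hf k
  obtain ⟨R1, hR1_2, hsq'⟩ := growth hf 2
  -- squared growth
  have hsq : ∀ s, R1 ≤ s → s ^ 2 < maxMod f s := by
    intro s hs
    obtain ⟨hpos, hlog⟩ := hsq' s hs
    have hs0 : (0:ℝ) < s := by linarith
    rw [← Real.log_lt_log_iff (by positivity) hpos, Real.log_pow]
    exact_mod_cast hlog
  -- the iterate sequence
  set r : ℕ → ℝ := fun n => (maxMod f)^[n] R0 with hrdef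
  have hr_succ : ∀ n, r (n + 1) = maxMod f (r n) := by
    intro n; simp [hrdef, Function.iterate_succ_apply']
  have hrR0 : ∀ n, R0 ≤ r n := by
    intro n
    induction n with
    | zero => simp [hrdef]
    | succ n ih => rw [hr_succ]; exact le_trans ih (hM (r n) ih).le
  have hrlt : ∀ n, r n < r (n + 1) := by
    intro n; rw [hr_succ]; exact hM (r n) (hrR0 n)
  have hrmono : StrictMono r := strictMono_nat_of_lt_succ hrlt
  -- unboundedness
  have hunb : ∀ C : ℝ, ∃ n, C < r n := by
    by_contra h
    push_neg at h
    obtain ⟨C, hC⟩ := h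
    have hbdd : BddAbove (Set.range r) := ⟨C, by rintro x ⟨n, rfl⟩; exact hC n⟩
    set L : ℝ := ⨆ n, r n with hL
    have htend : Filter.Tendsto r Filter.atTop (nhds L) :=
      tendsto_atTop_ciSup hrmono.monotone hbdd
    have hle : ∀ n, r n ≤ L := fun n => le_ciSup hbdd n
    have hLR0 : R0 ≤ L := le_trans (hrR0 0) (hle 0)
    have hL0 : 0 ≤ L := le_trans hR0.le hLR0
    obtain ⟨w, hw, hweq⟩ := maxMod_exists hcont hL0
    have hwabs : ‖w‖ = L := by
      have := mem_sphere_zero_iff_norm.mp hw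
      simpa using this
    have hLlt : L < ‖f w‖ := by
      rw [← hweq]; exact hM L hLR0
    have hLpos : 0 < L := lt_of_lt_of_le hR0 hLR0
    -- points z n on sphere r n converging to w
    set z : ℕ → ℂ := fun n => ((r n / L : ℝ) : ℂ) * w with hz
    have hzn : ∀ n, z n ∈ Metric.sphere (0:ℂ) (r n) := by
      intro n
      have hrn0 : (0:ℝ) ≤ r n := le_trans hR0.le (hrR0 n)
      rw [mem_sphere_zero_iff_norm]
      have h1 : ‖z n‖ = |r n / L| * ‖w‖ := by
        rw [hz]
        simp only [norm_mul, Complex.norm_real, Real.norm_eq_abs]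
      rw [h1, hwabs, abs_of_nonneg (div_nonneg hrn0 hL0),
        div_mul_cancel₀ _ hLpos.ne']
    have hzlim : Filter.Tendsto z Filter.atTop (nhds w) := by
      have h1 : Filter.Tendsto (fun n => r n / L) Filter.atTop (nhds 1) := by
        have := htend.div_const L
        rwa [div_self hLpos.ne'] at this
      have h2 : Filter.Tendsto (fun n => ((r n / L : ℝ) : ℂ)) Filter.atTop
          (nhds ((1:ℝ):ℂ)) :=
        (Complex.continuous_ofReal.tendsto 1).comp h1
      have h3 := h2.mul (tendsto_const_nhds (α := ℕ) (f := Filter.atTop) (x := w))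
      rw [hz]
      simpa [Complex.ofReal_div] using h3
    have hfz : Filter.Tendsto (fun n => ‖f (z n)‖) Filter.atTop
        (nhds ‖f w‖) :=
      ((continuous_norm.comp hcont).tendsto w).comp hzlim
    have hfle : ∀ n, ‖f (z n)‖ ≤ L := by
      intro n
      refine le_trans (maxMod_ge hcont (hzn n)) ?_
      rw [← hr_succ]; exact hle (n + 1)
    have := le_of_tendsto hfz (Filter.Eventually.of_forall hfle)
    linarith
  -- epsilon constants
  have hεR0 := hε01 R0 le_rfl
  set c : ℝ := ε R0 with hcdef
  have hc0 : 0 < c := hεR0.1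
  have hc1 : c < 1 := hεR0.2
  have hcinv : 1 < c⁻¹ := (one_lt_inv₀ hc0).mpr hc1
  have hεr : ∀ n, 1 ≤ n → c ^ (n + 1) ≤ ε (r n) := fun n hn => hεM R0 le_rfl n hn
  -- choose N0
  obtain ⟨N0, hN0⟩ := hunb (max R1 (c⁻¹ ^ 2))
  have hrN0_R1 : R1 ≤ r N0 := le_trans (le_max_left _ _) hN0.le
  have hrN0_c : c⁻¹ ^ 2 ≤ r N0 := le_trans (le_max_right _ _) hN0.le
  have hrN0_pos : (0:ℝ) < r N0 := lt_of_lt_of_le hR0 (hrR0 N0)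
  -- doubly exponential growth
  have hpow : ∀ j : ℕ, r N0 ^ (2 ^ j) ≤ r (N0 + j) := by
    intro j
    induction j with
    | zero => simp
    | succ j ih =>
      have h1 : R1 ≤ r (N0 + j) := le_trans hrN0_R1 (hrmono.monotone (Nat.le_add_right _ _))
      have h2 : r (N0 + j) ^ 2 < maxMod f (r (N0 + j)) := hsq _ h1
      have h3 : r N0 ^ (2 ^ (j + 1)) = (r N0 ^ (2 ^ j)) ^ 2 := by
        rw [← pow_mul, pow_succ]
      calc r N0 ^ (2 ^ (j + 1)) = (r N0 ^ (2 ^ j)) ^ 2 := h3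
        _ ≤ r (N0 + j) ^ 2 := by
            apply pow_le_pow_left₀ (by positivity) ih
        _ ≤ maxMod f (r (N0 + j)) := h2.le
        _ = r (N0 + j + 1) := (hr_succ _).symm
  -- the target threshold
  set T : ℝ := max s1 2 with hTdef
  have hT2 : (2:ℝ) ≤ T := le_max_right _ _
  -- choose J
  obtain ⟨J, hJ⟩ := (Filter.eventually_atTop).mp
    ((tendsto_pow_atTop_atTop_of_one_lt hcinv).eventually_ge_atTop (T * (c ^ (N0 + 2))⁻¹))
  -- key estimate
  have hkey : ∀ j : ℕ, J ≤ j → T ≤ c ^ (N0 + j + 2) * r (N0 + j) := by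
    intro j hj
    have e1 : c⁻¹ ^ (2 ^ (j + 1)) ≤ r N0 ^ (2 ^ j) := by
      calc c⁻¹ ^ (2 ^ (j + 1)) = (c⁻¹ ^ 2) ^ (2 ^ j) := by
            rw [← pow_mul, pow_succ, mul_comm]
        _ ≤ r N0 ^ (2 ^ j) := pow_le_pow_left₀ (by positivity) hrN0_c _
    have e2 : c ^ (N0 + j + 2) * (c⁻¹ ^ (2 ^ (j + 1))) ≤ c ^ (N0 + j + 2) * r (N0 + j) := by
      apply mul_le_mul_of_nonneg_left (le_trans e1 (hpow j)) (by positivity)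
    refine le_trans ?_ e2
    -- show T ≤ c ^ (N0 + j + 2) * c⁻¹ ^ (2 ^ (j + 1))
    have h2j : 2 * j ≤ 2 ^ (j + 1) := by
      have hj2 : j < 2 ^ j := Nat.lt_two_pow_self (n := j)
      calc 2 * j ≤ 2 * 2 ^ j := Nat.mul_le_mul_left 2 hj2.le
        _ = 2 ^ (j + 1) := by rw [pow_succ]; exact Nat.mul_comm _ _
    have e4 : c⁻¹ ^ j * c⁻¹ ^ j ≤ c⁻¹ ^ (2 ^ (j + 1)) := by
      rw [← pow_add]
      apply pow_le_pow_right₀ hcinv.le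
      omega
    have hcc : c ^ j * c⁻¹ ^ j = 1 := by
      rw [← mul_pow, mul_inv_cancel₀ hc0.ne', one_pow]
    have expand : c ^ (N0 + j + 2) = c ^ (N0 + 2) * c ^ j := by
      rw [← pow_add]; congr 1; omega
    have e5 : c ^ (N0 + 2) * c⁻¹ ^ j ≤ c ^ (N0 + j + 2) * c⁻¹ ^ (2 ^ (j + 1)) := by
      calc c ^ (N0 + 2) * c⁻¹ ^ j
          = c ^ (N0 + 2) * (c ^ j * c⁻¹ ^ j) * c⁻¹ ^ j := by rw [hcc, mul_one]
        _ = c ^ (N0 + 2) * c ^ j * (c⁻¹ ^ j * c⁻¹ ^ j) := by ring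
        _ ≤ c ^ (N0 + 2) * c ^ j * c⁻¹ ^ (2 ^ (j + 1)) :=
            mul_le_mul_of_nonneg_left e4 (by positivity)
        _ = c ^ (N0 + j + 2) * c⁻¹ ^ (2 ^ (j + 1)) := by rw [expand]
    have e6 : T ≤ c ^ (N0 + 2) * c⁻¹ ^ j := by
      have hJj := hJ j hj
      calc T = c ^ (N0 + 2) * (T * (c ^ (N0 + 2))⁻¹) := by field_simp
        _ ≤ c ^ (N0 + 2) * c⁻¹ ^ j := mul_le_mul_of_nonneg_left hJj (by positivity)
    exact le_trans e6 e5
  -- lower bound for ε r' * r' beyond r (N0 + J)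
  have hT : ∀ r', r (N0 + J) ≤ r' → T ≤ ε r' * r' := by
    intro r' hr'
    have hr'R0 : R0 ≤ r' := le_trans (hrR0 _) hr'
    have hex : ∃ i, r' < r (N0 + J + i) := by
      obtain ⟨m, hm⟩ := hunb r'
      exact ⟨m, lt_of_lt_of_le hm (hrmono.monotone (by omega))⟩
    have hQ : r' < r (N0 + J + Nat.find hex) := Nat.find_spec hex
    have hi0ne : Nat.find hex ≠ 0 := by
      intro h0
      rw [h0, Nat.add_zero] at hQ
      linarith
    obtain ⟨i, hieq⟩ : ∃ i, Nat.find hex = i + 1 := ⟨Nat.find hex - 1, by omega⟩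
    have hlow : r (N0 + J + i) ≤ r' := le_of_not_gt (Nat.find_min hex (by omega))
    have hup : r' < r (N0 + J + i + 1) := by
      rw [hieq] at hQ
      exact lt_of_lt_of_le hQ (le_of_eq (by congr 1))
    have hεn : c ^ (N0 + J + i + 1 + 1) ≤ ε (r (N0 + J + i + 1)) :=
      hεr (N0 + J + i + 1) (by omega)
    have hmono2 : ε (r (N0 + J + i + 1)) ≤ ε r' := hεmono r' (r (N0 + J + i + 1)) hr'R0 hup.le
    have hεrpos : 0 < ε r' := (hε01 r' hr'R0).1
    have hrn_nonneg : (0:ℝ) ≤ r (N0 + J + i) := le_trans hR0.le (hrR0 _)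
    calc T ≤ c ^ (N0 + (J + i) + 2) * r (N0 + (J + i)) := hkey (J + i) (by omega)
      _ = c ^ (N0 + J + i + 1 + 1) * r (N0 + J + i) := by
          rw [← Nat.add_assoc]
      _ ≤ ε r' * r' := by
          apply mul_le_mul (le_trans hεn hmono2) hlow hrn_nonneg hεrpos.le
  -- conclusion
  refine ⟨r (N0 + J), hrR0 _, fun r' hr' R hR => ?_⟩
  have hr'R0 : R0 ≤ r' := le_trans (hrR0 _) hr'
  have hεpos : 0 < ε r' := (hε01 r' hr'R0).1
  have hs : s1 ≤ ε r' * R := by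
    have h1 : T ≤ ε r' * r' := hT r' hr'
    have h2 : ε r' * r' ≤ ε r' * R := mul_le_mul_of_nonneg_left hR hεpos.le
    have h3 : s1 ≤ T := le_max_left _ _
    linarith
  obtain ⟨hpos, hlog⟩ := hgrow (ε r' * R) hs
  have hgt1 : (1:ℝ) < ε r' * R := by linarith
  rw [lt_div_iff₀ (Real.log_pos hgt1)]
  exact hlog
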